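/- Let F be a field, α ≥ 1, and let H = [H_1 H_2 H_3 H_4] be a matrix over F with 4α rows, where each thick column H_j is a 4α × c_j matrix partitioned into four α-row blocks A_{1,j}, A_{2,j}, A_{3,j}, A_{4,j}. Suppose that for each j ∈ {1, 2, 3, 4}: (i) the columns of H_j are linearly independent, and (ii) rank(H_j) = rank(A_{j,j}). Then 3·rank(H) ≥ 2·Σ_{j=1}^{4} rank(A_{j,j}) − Σ_{j=2}^{4} Σ_{ℓ=1}^{j−1} rank(A_{j,ℓ}). -/

import Mathlib

open scoped BigOperators

open Submodule LinearMap Module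

section Aux

variable {F M N : Type*} [Field F] [AddCommGroup M] [Module F M]
  [AddCommGroup N] [Module F N]

/-- Rank–nullity for the restriction of a linear map to a submodule. -/
lemma aux_map_add_inf_ker [FiniteDimensional F M] (f : M →ₗ[F] N) (W : Submodule F M) :
    finrank F (W.map f) + finrank F ↥(W ⊓ LinearMap.ker f) = finrank F W := by
  have h := LinearMap.finrank_range_add_finrank_ker (f.domRestrict W)
  rw [LinearMap.range_domRestrict, LinearMap.ker_domRestrict] at h
  rw [← h]
  congr 1
  have heq : Submodule.comap W.subtype (LinearMap.ker f)
      = Submodule.comap W.subtype (W ⊓ LinearMap.ker f) := by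
    rw [Submodule.comap_inf, Submodule.comap_subtype_self, top_inf_eq]
  rw [heq]
  exact ((Submodule.comapSubtypeEquivOfLe
    (inf_le_left : W ⊓ LinearMap.ker f ≤ W)).finrank_eq).symm

/-- If `f` does not drop the dimension of `W`, it does not drop the dimension of any
submodule of `W`. -/
lemma aux_inj_transfer [FiniteDimensional F M] (f : M →ₗ[F] N) {W W' : Submodule F M}
    (hW : finrank F (W.map f) = finrank F W) (h' : W' ≤ W) :
    finrank F (W'.map f) = finrank F W' := by
  have h1 := aux_map_add_inf_ker f W
  have h2 := aux_map_add_inf_ker f W'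
  have hle : finrank F ↥(W' ⊓ LinearMap.ker f) ≤ finrank F ↥(W ⊓ LinearMap.ker f) :=
    Submodule.finrank_mono (inf_le_inf_right _ h')
  omega

end Aux

section Key

variable {F M G : Type*} [Field F] [AddCommGroup M] [Module F M] [FiniteDimensional F M]
  [AddCommGroup G] [Module F G] [FiniteDimensional F G]

/-- The key subspace inequality: if `π j` is injective on `W j` for each `j`, then
`3·dim(ΣW) ≥ 2·Σ dim W_j − Σ_{l<j} dim π_j(W_l)`. -/
lemma key_ineq (π : Fin 4 → (M →ₗ[F] G)) (W : Fin 4 → Submodule F M)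
    (hinj : ∀ j, finrank F ((W j).map (π j)) = finrank F (W j)) :
    2 * ∑ j : Fin 4, (finrank F (W j) : ℤ)
      - (((finrank F ((W 0).map (π 1)) : ℤ)
          + (finrank F ((W 0).map (π 2)) : ℤ) + (finrank F ((W 1).map (π 2)) : ℤ))
          + ((finrank F ((W 0).map (π 3)) : ℤ) + (finrank F ((W 1).map (π 3)) : ℤ)
          + (finrank F ((W 2).map (π 3)) : ℤ)))
      ≤ 3 * (finrank F ↥(⨆ j, W j) : ℤ) := by
  set V : Submodule F M := ⨆ j, W j with hV
  have hWV : ∀ j, W j ≤ V := fun j => le_iSup W j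
  set N2 : Submodule F M := LinearMap.ker (π 2) with hN2
  set N3 : Submodule F M := LinearMap.ker (π 3) with hN3
  set X3 : Submodule F M := W 0 ⊓ W 1 ⊓ N2 with hX3
  set X4 : Submodule F M := W 0 ⊓ W 1 ⊓ N3 with hX4
  -- (A) dim (W0 ⊓ W1) ≤ r 1 0
  have hA : finrank F ↥(W 0 ⊓ W 1) ≤ finrank F ((W 0).map (π 1)) := by
    have h1 : finrank F ((W 0 ⊓ W 1 : Submodule F M).map (π 1)) = finrank F ↥(W 0 ⊓ W 1) :=
      aux_inj_transfer (π 1) (hinj 1) inf_le_right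
    rw [← h1]
    exact Submodule.finrank_mono (Submodule.map_mono inf_le_left)
  -- (B) dim X3 + dim X4 ≤ dim (W0 ⊓ W1) + dim (X3 ⊓ X4)
  have hB : finrank F X3 + finrank F X4
      ≤ finrank F ↥(W 0 ⊓ W 1) + finrank F ↥(X3 ⊓ X4) := by
    have := Submodule.finrank_sup_add_finrank_inf_eq X3 X4
    have hle : finrank F ↥(X3 ⊔ X4) ≤ finrank F ↥(W 0 ⊓ W 1) :=
      Submodule.finrank_mono (sup_le inf_le_left inf_le_left)
    omega
  -- (C) for k = 2, 3 : dim (W0 ⊓ Nk) + dim (W1 ⊓ Nk) ≤ dim Xk + dim (V ⊓ Nk)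
  have hC : ∀ Nk : Submodule F M,
      finrank F ↥(W 0 ⊓ Nk) + finrank F ↥(W 1 ⊓ Nk)
        ≤ finrank F ↥(W 0 ⊓ W 1 ⊓ Nk) + finrank F ↥(V ⊓ Nk) := by
    intro Nk
    have heq := Submodule.finrank_sup_add_finrank_inf_eq (W 0 ⊓ Nk) (W 1 ⊓ Nk)
    have h1 : (W 0 ⊓ Nk) ⊓ (W 1 ⊓ Nk) = W 0 ⊓ W 1 ⊓ Nk := by
      refine le_antisymm (le_inf (le_inf (inf_le_left.trans inf_le_left)
        (inf_le_right.trans inf_le_left)) (inf_le_left.trans inf_le_right)) ?_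
      exact le_inf (le_inf (inf_le_left.trans inf_le_left) inf_le_right)
        (le_inf (inf_le_left.trans inf_le_right) inf_le_right)
    have h2 : finrank F ↥((W 0 ⊓ Nk) ⊔ (W 1 ⊓ Nk)) ≤ finrank F ↥(V ⊓ Nk) :=
      Submodule.finrank_mono (sup_le (inf_le_inf_right Nk (hWV 0))
        (inf_le_inf_right Nk (hWV 1)))
    rw [h1] at heq
    omega
  -- (D) dim (Wl) = r k l + dim (Wl ⊓ Nk)
  have hD : ∀ (k l : Fin 4),
      finrank F ((W l).map (π k)) + finrank F ↥(W l ⊓ LinearMap.ker (π k))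
        = finrank F (W l) := fun k l => aux_map_add_inf_ker (π k) (W l)
  -- (E) dim (V ⊓ Nk) + dim (W k) ≤ dim V
  have hE : ∀ k : Fin 4,
      finrank F ↥(V ⊓ LinearMap.ker (π k)) + finrank F (W k) ≤ finrank F V := by
    intro k
    have h1 := aux_map_add_inf_ker (π k) V
    have h2 : finrank F ((W k).map (π k)) ≤ finrank F (V.map (π k)) :=
      Submodule.finrank_mono (Submodule.map_mono (hWV k))
    rw [hinj k] at h2
    omega
  -- (F) dim (V ⊓ N2 ⊓ N3) + dim W2 + dim W3 ≤ dim V + r 3 2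
  have hF : finrank F ↥(V ⊓ (N2 ⊓ N3)) + finrank F (W 2) + finrank F (W 3)
      ≤ finrank F V + finrank F ((W 2).map (π 3)) := by
    set π23 : M →ₗ[F] G × G := (π 2).prod (π 3) with hπ23
    have hker : LinearMap.ker π23 = N2 ⊓ N3 := LinearMap.ker_prod _ _
    have h1 := aux_map_add_inf_ker π23 V
    rw [hker] at h1
    set Y2 : Submodule F (G × G) := (W 2).map π23 with hY2
    set Y3 : Submodule F (G × G) := (W 3).map π23 with hY3
    -- fst ∘ π23 = π 2, snd ∘ π23 = π 3
    have hfst : ∀ (U : Submodule F M),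
        (U.map π23).map (LinearMap.fst F G G) = U.map (π 2) := by
      intro U
      rw [hπ23, ← Submodule.map_comp, LinearMap.fst_prod]
    have hsnd : ∀ (U : Submodule F M),
        (U.map π23).map (LinearMap.snd F G G) = U.map (π 3) := by
      intro U
      rw [hπ23, ← Submodule.map_comp, LinearMap.snd_prod]
    have hY2dim : finrank F (W 2) ≤ finrank F Y2 := by
      have : finrank F ((W 2).map (π 2)) ≤ finrank F Y2 := by
        rw [← hfst (W 2)]
        exact Submodule.finrank_map_le _ _
      rw [hinj 2] at this; exact this
    have hY3dim : finrank F (W 3) ≤ finrank F Y3 := by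
      have : finrank F ((W 3).map (π 3)) ≤ finrank F Y3 := by
        rw [← hsnd (W 3)]
        exact Submodule.finrank_map_le _ _
      rw [hinj 3] at this; exact this
    -- snd is injective on Y3
    have hY3snd : finrank F (Y3.map (LinearMap.snd F G G)) = finrank F Y3 := by
      have hle : finrank F Y3 ≤ finrank F (W 3) := Submodule.finrank_map_le _ _
      have : finrank F (Y3.map (LinearMap.snd F G G)) = finrank F ((W 3).map (π 3)) := by
        rw [hsnd (W 3)]
      rw [hinj 3] at this
      have hle2 : finrank F (Y3.map (LinearMap.snd F G G)) ≤ finrank F Y3 :=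
        Submodule.finrank_map_le _ _
      omega
    have hY23 : finrank F ↥(Y2 ⊓ Y3) ≤ finrank F ((W 2).map (π 3)) := by
      have h2 : finrank F ((Y2 ⊓ Y3 : Submodule F (G × G)).map (LinearMap.snd F G G))
          = finrank F ↥(Y2 ⊓ Y3) := aux_inj_transfer _ hY3snd inf_le_right
      rw [← h2, ← hsnd (W 2)]
      exact Submodule.finrank_mono (Submodule.map_mono inf_le_left)
    have hsup : finrank F ↥(Y2 ⊔ Y3) ≤ finrank F (V.map π23) :=
      Submodule.finrank_mono (sup_le (Submodule.map_mono (hWV 2)) (Submodule.map_mono (hWV 3)))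
    have hsi := Submodule.finrank_sup_add_finrank_inf_eq Y2 Y3
    omega
  -- assemble
  have hX34 : finrank F ↥(X3 ⊓ X4) ≤ finrank F ↥(V ⊓ (N2 ⊓ N3)) := by
    apply Submodule.finrank_mono
    rw [hX3, hX4]
    refine le_inf (inf_le_left.trans (inf_le_left.trans (inf_le_left.trans (hWV 0)))) ?_
    exact le_inf (inf_le_left.trans inf_le_right) (inf_le_right.trans inf_le_right)
  have hC2 := hC N2
  have hC3 := hC N3
  have hD20 := hD 2 0
  have hD21 := hD 2 1
  have hD30 := hD 3 0
  have hD31 := hD 3 1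
  have hE2 := hE 2
  have hE3 := hE 3
  rw [Fin.sum_univ_four]
  rw [← hN2] at hD20 hD21
  rw [← hN3] at hD30 hD31
  rw [← hN2] at hE2
  rw [← hN3] at hE3
  rw [← hX3] at hC2
  rw [← hX4] at hC3
  push_cast
  omega

end Key

/-- Theorem 4 for `(4,3,3)`: let `H = [H₁ H₂ H₃ H₄]` be a matrix with
`4α` rows whose `j`-th thick column `H_j` has `c j` linearly independent columns and
satisfies `rank(H_j) = rank(A_{j,j})`, where `A_{i,j}` is the `i`-th `α`-row block of
`H_j`. Then `3 rank(H) ≥ 2 ∑_j rank(A_{j,j}) - ∑_{j} ∑_{ℓ<j} rank(A_{j,ℓ})`. -/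
theorem stmt10 (F : Type*) [Field F] (a : ℕ) (ha : 1 ≤ a)
    (c : Fin 4 → ℕ)
    (Hcol : ∀ j : Fin 4, Matrix (Fin 4 × Fin a) (Fin (c j)) F)
    (hindep : ∀ j : Fin 4,
      LinearIndependent F (fun l : Fin (c j) => (fun r => Hcol j r l : (Fin 4 × Fin a) → F)))
    (hrank : ∀ j : Fin 4,
      (Hcol j).rank = (Matrix.of fun (x : Fin a) (l : Fin (c j)) => Hcol j (j, x) l).rank) :
    3 * ((Matrix.of fun (r : Fin 4 × Fin a) (p : Σ j : Fin 4, Fin (c j)) =>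
          Hcol p.1 r p.2).rank : ℤ)
      ≥ 2 * ∑ j : Fin 4,
            ((Matrix.of fun (x : Fin a) (l : Fin (c j)) => Hcol j (j, x) l).rank : ℤ)
        - ∑ j : Fin 4, ∑ l ∈ Finset.univ.filter (fun l : Fin 4 => l < j),
            ((Matrix.of fun (x : Fin a) (y : Fin (c l)) => Hcol l (j, x) y).rank : ℤ) := by
  classical
  set W : Fin 4 → Submodule F ((Fin 4 × Fin a) → F) :=
    fun j => LinearMap.range (Hcol j).mulVecLin with hW
  set π : Fin 4 → (((Fin 4 × Fin a) → F) →ₗ[F] (Fin a → F)) :=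
    fun j => LinearMap.funLeft F F (fun x : Fin a => (j, x)) with hπ
  -- the block matrices
  have hcomp : ∀ j l : Fin 4,
      (π j) ∘ₗ (Hcol l).mulVecLin
        = (Matrix.of fun (x : Fin a) (y : Fin (c l)) => Hcol l (j, x) y).mulVecLin := by
    intro j l
    rfl
  have hblock : ∀ j l : Fin 4,
      (Matrix.of fun (x : Fin a) (y : Fin (c l)) => Hcol l (j, x) y).rank
        = finrank F ((W l).map (π j)) := by
    intro j l
    rw [Matrix.rank, ← hcomp j l, LinearMap.range_comp]
  have hWrank : ∀ j, finrank F (W j) = (Hcol j).rank := fun j => rfl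
  have hinj : ∀ j, finrank F ((W j).map (π j)) = finrank F (W j) := by
    intro j
    rw [← hblock j j, hWrank j, hrank j]
  -- the big matrix
  have hrange : LinearMap.range (Matrix.of fun (r : Fin 4 × Fin a)
        (p : Σ j : Fin 4, Fin (c j)) => Hcol p.1 r p.2).mulVecLin = ⨆ j, W j := by
    rw [Matrix.range_mulVecLin]
    have hT : (Matrix.of fun (r : Fin 4 × Fin a) (p : Σ j : Fin 4, Fin (c j)) =>
        Hcol p.1 r p.2).col = fun (p : Σ j : Fin 4, Fin (c j)) (r : Fin 4 × Fin a) =>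
        Hcol p.1 r p.2 := rfl
    rw [hT, Set.range_sigma_eq_iUnion_range, Submodule.span_iUnion]
    refine iSup_congr fun j => ?_
    exact (Matrix.range_mulVecLin (Hcol j)).symm
  have hbig : (Matrix.of fun (r : Fin 4 × Fin a) (p : Σ j : Fin 4, Fin (c j)) =>
      Hcol p.1 r p.2).rank = finrank F ↥(⨆ j, W j) := by
    rw [Matrix.rank, hrange]
  have hkey := key_ineq π W hinj
  rw [hbig]
  have hsum1 : ∑ j : Fin 4,
      ((Matrix.of fun (x : Fin a) (l : Fin (c j)) => Hcol j (j, x) l).rank : ℤ)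
      = ∑ j : Fin 4, (finrank F (W j) : ℤ) := by
    refine Finset.sum_congr rfl fun j _ => ?_
    rw [hblock j j, hinj j]
  have hsum2 : ∑ j : Fin 4, ∑ l ∈ Finset.univ.filter (fun l : Fin 4 => l < j),
      ((Matrix.of fun (x : Fin a) (y : Fin (c l)) => Hcol l (j, x) y).rank : ℤ)
      = (((finrank F ((W 0).map (π 1)) : ℤ)
          + (finrank F ((W 0).map (π 2)) : ℤ) + (finrank F ((W 1).map (π 2)) : ℤ))
          + ((finrank F ((W 0).map (π 3)) : ℤ) + (finrank F ((W 1).map (π 3)) : ℤ)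
          + (finrank F ((W 2).map (π 3)) : ℤ))) := by
    have h0 : Finset.univ.filter (fun l : Fin 4 => l < (0 : Fin 4)) = ∅ := by decide
    have h1 : Finset.univ.filter (fun l : Fin 4 => l < (1 : Fin 4)) = {0} := by decide
    have h2 : Finset.univ.filter (fun l : Fin 4 => l < (2 : Fin 4)) = {0, 1} := by decide
    have h3 : Finset.univ.filter (fun l : Fin 4 => l < (3 : Fin 4)) = {0, 1, 2} := by decide
    rw [Fin.sum_univ_four, h0, h1, h2, h3]
    simp only [Finset.sum_empty, Finset.sum_insert, Finset.sum_singleton, Finset.mem_insert,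
      Finset.mem_singleton]
    rw [Finset.sum_insert (by decide), Finset.sum_insert (by decide),
      Finset.sum_insert (by decide), Finset.sum_singleton, Finset.sum_singleton]
    simp only [hblock]
    ring
  rw [hsum1, hsum2]
  exact hkey
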